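/- For all real s ≥ 1, the integral ∫_{-π}^{π} (1 - cos(2π s cos θ)) dθ is bounded below by a positive constant c independent of s. -/

import Mathlib

open Real intervalIntegral Set MeasureTheory

lemma sin_half_gt : (15/32 : ℝ) < Real.sin (1/2) := by
  have h := Real.sin_gt_sub_cube (by norm_num : (0:ℝ) < 1/2)
  norm_num at h
  linarith

lemma sin_lb {θ : ℝ} (h1 : 1/2 ≤ θ) (h2 : θ ≤ π/2) : Real.sin (1/2) ≤ Real.sin θ :=
  Real.sin_le_sin_of_le_of_le_pi_div_two (by linarith [Real.pi_pos]) h2 h1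

lemma ibp_bound (a : ℝ) (ha : 2*π ≤ a) :
    |∫ θ in (1/2:ℝ)..(π/2), Real.cos (a * Real.cos θ)| ≤ 2 / (a * Real.sin (1/2)) := by
  have hπ := Real.pi_gt_three
  have ha0 : 0 < a := by linarith [Real.pi_pos]
  have hs0 : 0 < Real.sin (1/2) := lt_trans (by norm_num) sin_half_gt
  have hIcc : uIcc (1/2 : ℝ) (π/2) = Icc (1/2:ℝ) (π/2) := by
    rw [uIcc_of_le]; linarith
  have hmem : ∀ x ∈ Icc (1/2:ℝ) (π/2), Real.sin (1/2) ≤ Real.sin x := fun x hx =>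
    sin_lb hx.1 hx.2
  have hne : ∀ x ∈ Icc (1/2:ℝ) (π/2), a * Real.sin x ≠ 0 := by
    intro x hx
    have h := hmem x hx
    exact ne_of_gt (mul_pos ha0 (lt_of_lt_of_le hs0 h))
  -- u, v
  set u : ℝ → ℝ := fun θ => -(a * Real.sin θ)⁻¹ with hu_def
  set u' : ℝ → ℝ := fun θ => a * Real.cos θ / (a * Real.sin θ)^2 with hu'_def
  set v : ℝ → ℝ := fun θ => Real.sin (a * Real.cos θ) with hv_def
  set v' : ℝ → ℝ := fun θ => Real.cos (a * Real.cos θ) * (a * -Real.sin θ) with hv'_def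
  have hu : ∀ x ∈ uIcc (1/2:ℝ) (π/2), HasDerivAt u (u' x) x := by
    intro x hx
    rw [hIcc] at hx
    have h1 : HasDerivAt (fun θ => a * Real.sin θ) (a * Real.cos x) x :=
      (Real.hasDerivAt_sin x).const_mul a
    have h2 := (h1.inv (hne x hx)).neg
    refine h2.congr_deriv ?_
    have hx2 := hne x hx
    simp only [hu'_def, neg_div, neg_neg]
  have hv : ∀ x ∈ uIcc (1/2:ℝ) (π/2), HasDerivAt v (v' x) x := by
    intro x hx
    have h1 : HasDerivAt (fun θ => a * Real.cos θ) (a * -Real.sin x) x :=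
      (Real.hasDerivAt_cos x).const_mul a
    exact (Real.hasDerivAt_sin (a * Real.cos x)).comp x h1
  have hcontu' : ContinuousOn u' (uIcc (1/2:ℝ) (π/2)) := by
    rw [hIcc]
    apply ContinuousOn.div
    · fun_prop
    · fun_prop
    · intro x hx
      exact pow_ne_zero 2 (hne x hx)
  have hu'int : IntervalIntegrable u' volume (1/2) (π/2) :=
    hcontu'.intervalIntegrable
  have hv'int : IntervalIntegrable v' volume (1/2) (π/2) := by
    apply ContinuousOn.intervalIntegrable; fun_prop
  have key := _root_.intervalIntegral.integral_mul_deriv_eq_deriv_mul hu hv hu'int hv'int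
  -- rewrite integrand
  have heq : ∫ θ in (1/2:ℝ)..(π/2), Real.cos (a * Real.cos θ)
      = ∫ θ in (1/2:ℝ)..(π/2), u θ * v' θ := by
    apply _root_.intervalIntegral.integral_congr
    intro x hx
    rw [hIcc] at hx
    have h := hne x hx
    simp only [hu_def, hv'_def]
    field_simp
    rw [mul_div_assoc, div_self (right_ne_zero_of_mul h), mul_one]
  rw [heq, key]
  -- boundary terms
  have hb1 : v (π/2) = 0 := by simp [hv_def]
  have hb2 : |u (1/2) * v (1/2)| ≤ (a * Real.sin (1/2))⁻¹ := by
    rw [abs_mul]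
    have h1 : |u (1/2)| = (a * Real.sin (1/2))⁻¹ := by
      simp only [hu_def, abs_neg, abs_inv]
      rw [abs_of_pos (by positivity)]
    rw [h1]
    have h2 : |v (1/2)| ≤ 1 := Real.abs_sin_le_one _
    nlinarith [inv_pos.mpr (mul_pos ha0 hs0)]
  -- remaining integral
  have hItail : |∫ θ in (1/2:ℝ)..(π/2), u' θ * v θ| ≤ (a * Real.sin (1/2))⁻¹ := by
    have hle : (1/2:ℝ) ≤ π/2 := by linarith
    have habs : |∫ θ in (1/2:ℝ)..(π/2), u' θ * v θ|
        ≤ ∫ θ in (1/2:ℝ)..(π/2), u' θ := by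
      have hprod_int : IntervalIntegrable (fun θ => u' θ * v θ) volume (1/2) (π/2) := by
        apply ContinuousOn.intervalIntegrable
        rw [hIcc] at hcontu' ⊢
        exact hcontu'.mul (by fun_prop)
      have habs1 := _root_.intervalIntegral.abs_integral_le_integral_abs
        (f := fun θ => u' θ * v θ) (μ := volume) hle
      have habs2 : (∫ θ in (1/2:ℝ)..(π/2), |u' θ * v θ|)
          ≤ ∫ θ in (1/2:ℝ)..(π/2), u' θ := by
        apply _root_.intervalIntegral.integral_mono_on hle hprod_int.abs hu'int
        intro x hx
        have hsx : Real.sin (1/2) ≤ Real.sin x := hmem x hx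
        have hcx : 0 ≤ Real.cos x := Real.cos_nonneg_of_mem_Icc
          ⟨by linarith [Real.pi_pos, hx.1], hx.2⟩
        have hvb : |v x| ≤ 1 := Real.abs_sin_le_one _
        have hvb0 : 0 ≤ |v x| := abs_nonneg _
        have hu'nn : 0 ≤ u' x := by
          simp only [hu'_def]; positivity
        calc |u' x * v x| = u' x * |v x| := by
              rw [abs_mul, abs_of_nonneg hu'nn]
            _ ≤ u' x * 1 := by nlinarith
            _ = u' x := mul_one _
      linarith
    have hcomp : ∫ θ in (1/2:ℝ)..(π/2), u' θ = u (π/2) - u (1/2) := by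
      apply _root_.intervalIntegral.integral_eq_sub_of_hasDerivAt
      · intro x hx; exact hu x hx
      · exact hu'int
    rw [hcomp] at habs
    have : u (π/2) - u (1/2) ≤ (a * Real.sin (1/2))⁻¹ := by
      simp only [hu_def, Real.sin_pi_div_two, mul_one]
      have : 0 < a⁻¹ := by positivity
      linarith
    linarith
  calc |u (π/2) * v (π/2) - u (1/2) * v (1/2) - ∫ θ in (1/2:ℝ)..(π/2), u' θ * v θ|
      ≤ |u (π/2) * v (π/2)| + |u (1/2) * v (1/2)| + |∫ θ in (1/2:ℝ)..(π/2), u' θ * v θ| := by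
        have := abs_sub (u (π/2) * v (π/2) - u (1/2) * v (1/2))
          (∫ θ in (1/2:ℝ)..(π/2), u' θ * v θ)
        have h2 := abs_sub (u (π/2) * v (π/2)) (u (1/2) * v (1/2))
        calc _ ≤ |u (π/2) * v (π/2) - u (1/2) * v (1/2)|
              + |∫ θ in (1/2:ℝ)..(π/2), u' θ * v θ| := abs_sub _ _
          _ ≤ _ := by linarith [abs_sub (u (π/2) * v (π/2)) (u (1/2) * v (1/2))]
    _ ≤ 0 + (a * Real.sin (1/2))⁻¹ + (a * Real.sin (1/2))⁻¹ := by
        rw [hb1, mul_zero, abs_zero]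
        exact add_le_add (add_le_add le_rfl hb2) hItail
    _ = 2 / (a * Real.sin (1/2)) := by ring

theorem stmt0 :
    ∃ c > (0:ℝ), ∀ s : ℝ, 1 ≤ s →
      c ≤ ∫ θ in (-π)..π, (1 - Real.cos (2 * π * s * Real.cos θ)) := by
  refine ⟨1/4, by norm_num, fun s hs => ?_⟩
  have hπ := Real.pi_gt_d6
  have hπ' := Real.pi_lt_d2
  set a : ℝ := 2 * π * s with ha_def
  have ha : 2 * π ≤ a := by nlinarith
  have ha0 : 0 < a := by linarith
  have hcont : Continuous (fun θ : ℝ => 1 - Real.cos (a * Real.cos θ)) := by fun_prop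
  have hint : ∀ x y : ℝ, IntervalIntegrable (fun θ => 1 - Real.cos (a * Real.cos θ))
      volume x y := fun x y => hcont.intervalIntegrable x y
  have hnn : ∀ θ : ℝ, 0 ≤ 1 - Real.cos (a * Real.cos θ) := fun θ => by
    linarith [Real.cos_le_one (a * Real.cos θ)]
  -- split integral
  have hsplit1 : (∫ θ in (-π)..(π/2), (1 - Real.cos (a * Real.cos θ)))
      + (∫ θ in (π/2)..π, (1 - Real.cos (a * Real.cos θ)))
      = ∫ θ in (-π)..π, (1 - Real.cos (a * Real.cos θ)) :=
    _root_.intervalIntegral.integral_add_adjacent_intervals (hint _ _) (hint _ _)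
  have hsplit2 : (∫ θ in (-π)..(1/2:ℝ), (1 - Real.cos (a * Real.cos θ)))
      + (∫ θ in (1/2:ℝ)..(π/2), (1 - Real.cos (a * Real.cos θ)))
      = ∫ θ in (-π)..(π/2), (1 - Real.cos (a * Real.cos θ)) :=
    _root_.intervalIntegral.integral_add_adjacent_intervals (hint _ _) (hint _ _)
  have h1 : 0 ≤ ∫ θ in (-π)..(1/2:ℝ), (1 - Real.cos (a * Real.cos θ)) :=
    _root_.intervalIntegral.integral_nonneg (by linarith) (fun x _ => hnn x)
  have h2 : 0 ≤ ∫ θ in (π/2)..π, (1 - Real.cos (a * Real.cos θ)) :=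
    _root_.intervalIntegral.integral_nonneg (by linarith) (fun x _ => hnn x)
  -- middle piece
  have hmid : ∫ θ in (1/2:ℝ)..(π/2), (1 - Real.cos (a * Real.cos θ))
      = (π/2 - 1/2) - ∫ θ in (1/2:ℝ)..(π/2), Real.cos (a * Real.cos θ) := by
    rw [_root_.intervalIntegral.integral_sub (intervalIntegrable_const)
      ((by fun_prop : Continuous (fun θ : ℝ => Real.cos (a * Real.cos θ))).intervalIntegrable _ _)]
    simp
  have hbound := ibp_bound a ha
  have hs0 : (15/32:ℝ) < Real.sin (1/2) := sin_half_gt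
  have hbb : 2 / (a * Real.sin (1/2)) ≤ 2 / (2 * π * (15/32)) := by
    apply div_le_div_of_nonneg_left (by norm_num) (by nlinarith)
    nlinarith
  have hfinal : (1/4:ℝ) ≤ ∫ θ in (1/2:ℝ)..(π/2), (1 - Real.cos (a * Real.cos θ)) := by
    rw [hmid]
    have := abs_le.mp hbound
    have h3 : 2 / (2 * π * (15/32)) = 32 / (15 * π) := by ring
    rw [h3] at hbb
    have h4 : 32 / (15 * π) ≤ 0.68 := by
      rw [div_le_iff₀ (by nlinarith)]
      nlinarith
    nlinarith [this.2]
  have hgoal : (∫ θ in (-π)..π, (1 - Real.cos (a * Real.cos θ)))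
      = ∫ θ in (-π)..π, (1 - Real.cos (2 * π * s * Real.cos θ)) := rfl
  rw [← hgoal, ← hsplit1, ← hsplit2]
  linarith
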